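/- Let ([a_ℓ]) be a sequence of tubular tensors of length p and [w] a Hermitian positive definite tubular tensor with [w] ≺ [e_1] (strictly less than the tubular identity in the Loewner-type order). If [a_ℓ]^H * [a_ℓ] ⪯ [w] * [a_{ℓ-1}]^H * [a_{ℓ-1}] for all ℓ ≥ 1, then [a_ℓ] → 0 as ℓ → ∞ (each frontal slice tends to zero). -/

import Mathlib

open Matrix Complex Finset Kronecker
open scoped ComplexOrder

/-- The `p × p` circulant matrix with first column `v`. -/
noncomputable def circ (p : ℕ) (v : Fin p → ℂ) : Matrix (Fin p) (Fin p) ℂ :=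
  Matrix.of fun j k => v (j - k)

/-- The normalized (unitary) DFT matrix of order `p`, with `ω = exp(-2πi/p)`. -/
noncomputable def Fp (p : ℕ) : Matrix (Fin p) (Fin p) ℂ :=
  Matrix.of fun j k =>
    Complex.exp (-(2 * Real.pi * Complex.I * (j.val * k.val)) / p) / (Real.sqrt p : ℂ)

/-- Block circulant matrix of a third-order tensor given by its frontal slices. -/
noncomputable def bcirc {n m p : ℕ} (X : Fin p → Matrix (Fin n) (Fin m) ℂ) :
    Matrix (Fin p × Fin n) (Fin p × Fin m) ℂ :=
  Matrix.of fun jr kc => X (jr.1 - kc.1) jr.2 kc.2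

/-- Block circulant matrix of an `n × 1 × p` tensor (slices viewed as vectors). -/
noncomputable def bcircV {n p : ℕ} (X : Fin p → Fin n → ℂ) :
    Matrix (Fin p × Fin n) (Fin p) ℂ :=
  Matrix.of fun jr k => X (jr.1 - k) jr.2

/-- Block diagonal matrix (square-block index first). -/
noncomputable def blockDiagMat {n m p : ℕ} (D : Fin p → Matrix (Fin n) (Fin m) ℂ) :
    Matrix (Fin p × Fin n) (Fin p × Fin m) ℂ :=
  Matrix.of fun jr kc => if jr.1 = kc.1 then D jr.1 jr.2 kc.2 else 0

/-- Block diagonal matrix whose blocks are column vectors. -/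
noncomputable def blockDiagVec {n p : ℕ} (x : Fin p → Fin n → ℂ) :
    Matrix (Fin p × Fin n) (Fin p) ℂ :=
  Matrix.of fun jr k => if jr.1 = k then x k jr.2 else 0

/-- The T-product of two third-order tensors (slicewise cyclic convolution). -/
noncomputable def tmul {n m l p : ℕ} (A : Fin p → Matrix (Fin n) (Fin m) ℂ)
    (B : Fin p → Matrix (Fin m) (Fin l) ℂ) : Fin p → Matrix (Fin n) (Fin l) ℂ :=
  fun i => ∑ j, A (i - j) * B j

/-- The identity tensor: first frontal slice is `I_n`, the others are zero. -/
noncomputable def tId (n p : ℕ) [NeZero p] : Fin p → Matrix (Fin n) (Fin n) ℂ :=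
  fun i => if i = 0 then 1 else 0

/-- Conjugate T-transpose of a tensor. -/
noncomputable def tH {n m p : ℕ} (X : Fin p → Matrix (Fin n) (Fin m) ℂ) :
    Fin p → Matrix (Fin m) (Fin n) ℂ :=
  fun i => (X (-i))ᴴ

/-- The tubular tensor `𝒳ᴴ * 𝒴` for `n × 1 × p` tensors `𝒳, 𝒴`. -/
noncomputable def xHy {n p : ℕ} (X Y : Fin p → Fin n → ℂ) : Fin p → ℂ :=
  fun i => ∑ j, star (X (j - i)) ⬝ᵥ Y j

/-- The tubular tensor `𝒳ᴴ * 𝒳` for an `n × 1 × p` tensor `𝒳`. -/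
noncomputable def xHx {n p : ℕ} (X : Fin p → Fin n → ℂ) : Fin p → ℂ := xHy X X

/-- T-linear independence of a family of `n × 1 × p` tensors
(coefficients are tubular tensors acting via the T-product). -/
def TLinIndep {n p k : ℕ} (X : Fin k → Fin p → Fin n → ℂ) : Prop :=
  ∀ c : Fin k → Fin p → ℂ,
    (∀ i : Fin p, ∑ j, ∑ t, c j t • X j (i - t) = 0) → ∀ j, c j = 0

/-- `[λ]` is a tubular eigenvalue of the `n × n × p` tensor `𝒜`:
`𝒜 * 𝒳 = 𝒳 * [λ]` for some eigentensor `𝒳` with `𝒳ᴴ * 𝒳` invertible. -/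
def IsTubEig {n p : ℕ} (A : Fin p → Matrix (Fin n) (Fin n) ℂ) (lam : Fin p → ℂ) : Prop :=
  ∃ X : Fin p → Fin n → ℂ,
    (∀ i, ∑ t, (A (i - t)).mulVec (X t) = ∑ t, lam t • X (i - t)) ∧
    IsUnit (circ p (xHx X))

private lemma trace_nonneg_of_psd' {p : ℕ} {A : Matrix (Fin p) (Fin p) ℂ}
    (hA : A.PosSemidef) : 0 ≤ A.trace := by
  rw [Matrix.trace]
  apply Finset.sum_nonneg
  intro i _
  have := hA.dotProduct_mulVec_nonneg (Pi.single i 1)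
  simpa [dotProduct, Matrix.mulVec, Pi.single_apply, Finset.sum_ite_eq] using this

private lemma exists_smul_one_le' {p : ℕ} [NeZero p] {A : Matrix (Fin p) (Fin p) ℂ}
    (hA : A.PosDef) : ∃ ε : ℝ, 0 < ε ∧ (A - (ε : ℂ) • 1).PosSemidef := by
  have hH := hA.1
  set ε : ℝ := Finset.univ.inf' Finset.univ_nonempty hH.eigenvalues with hεdef
  have hε : 0 < ε := by
    rw [hεdef, Finset.lt_inf'_iff]
    intro i _
    exact hA.eigenvalues_pos i
  set U : Matrix (Fin p) (Fin p) ℂ := (hH.eigenvectorUnitary : Matrix (Fin p) (Fin p) ℂ) with hUdef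
  have hU : U * star U = 1 := Matrix.mem_unitaryGroup_iff.mp hH.eigenvectorUnitary.2
  have hd : Matrix.diagonal (fun i : Fin p => (((hH.eigenvalues i - ε : ℝ)) : ℂ))
      = Matrix.diagonal (RCLike.ofReal ∘ hH.eigenvalues) - (ε : ℂ) • 1 := by
    ext i j
    by_cases h : i = j <;>
      simp [h, Matrix.diagonal_apply, Matrix.one_apply, Function.comp, Complex.ofReal_sub]
  have key : U * Matrix.diagonal (fun i : Fin p => (((hH.eigenvalues i - ε : ℝ)) : ℂ)) * star U
      = A - (ε : ℂ) • 1 := by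
    rw [hd]
    rw [Matrix.mul_sub, Matrix.sub_mul, ← Unitary.conjStarAlgAut_apply (S := ℂ) hH.eigenvectorUnitary, ← hH.spectral_theorem]
    congr 1
    rw [Matrix.mul_smul, mul_one, Matrix.smul_mul, hU]
  refine ⟨ε, hε, ?_⟩
  rw [← key]
  have hdiag : (Matrix.diagonal (fun i : Fin p => (((hH.eigenvalues i - ε : ℝ)) : ℂ))).PosSemidef := by
    rw [Matrix.posSemidef_diagonal_iff]
    intro i
    have : ε ≤ hH.eigenvalues i := Finset.inf'_le _ (Finset.mem_univ i)
    have h' : (0:ℝ) ≤ hH.eigenvalues i - ε := by linarith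
    exact_mod_cast Complex.zero_le_real.mpr h'
  have h2 := hdiag.mul_mul_conjTranspose_same U
  rwa [← Matrix.star_eq_conjTranspose] at h2


/-- a tubular contraction sequence tends to zero: if
`[a_ℓ]ᴴ*[a_ℓ] ⪯ [w]*[a_{ℓ-1}]ᴴ*[a_{ℓ-1}]` with `[w]` Hermitian positive definite and
`[w] ≺ [e₁]`, then every frontal slice of `[a_ℓ]` tends to zero. -/
theorem tubular_contraction_tendsto_zero (p : ℕ) [NeZero p]
    (a : ℕ → Fin p → ℂ) (w : Fin p → ℂ)
    (hw : (circ p w).PosDef)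
    (hw1 : (circ p (fun i => if i = 0 then 1 else 0) - circ p w).PosDef)
    (hrec : ∀ ℓ : ℕ,
      (circ p w * ((circ p (a ℓ))ᴴ * circ p (a ℓ))
        - (circ p (a (ℓ + 1)))ᴴ * circ p (a (ℓ + 1))).PosSemidef) :
    ∀ i, Filter.Tendsto (fun ℓ => a ℓ i) Filter.atTop (nhds 0) := by
  classical
  have hcirc1 : circ p (fun i : Fin p => if i = 0 then (1:ℂ) else 0)
      = (1 : Matrix (Fin p) (Fin p) ℂ) := by
    ext j k
    simp [circ, Matrix.one_apply, sub_eq_zero]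
  rw [hcirc1] at hw1
  obtain ⟨ε, hε, hle⟩ := exists_smul_one_le' hw1
  set W := circ p w with hW
  set M : ℕ → Matrix (Fin p) (Fin p) ℂ := fun ℓ => (circ p (a ℓ))ᴴ * circ p (a ℓ) with hMdef
  have hMpsd : ∀ ℓ, (M ℓ).PosSemidef := fun ℓ => Matrix.posSemidef_conjTranspose_mul_self _
  set ω : ℝ := max (1 - ε) 0 with hωdef
  have hω0 : 0 ≤ ω := le_max_right _ _
  have hω1 : ω < 1 := max_lt (by linarith) one_pos
  have hWle : ((ω:ℂ) • (1 : Matrix (Fin p) (Fin p) ℂ) - W).PosSemidef := by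
    have hc : (0:ℝ) ≤ ω - (1 - ε) := by
      have := le_max_left (1 - ε) 0; linarith
    have hsmul : ((((ω - (1 - ε) : ℝ)) : ℂ) • (1 : Matrix (Fin p) (Fin p) ℂ)).PosSemidef := by
      rw [Matrix.smul_one_eq_diagonal, Matrix.posSemidef_diagonal_iff]
      intro j
      exact_mod_cast Complex.zero_le_real.mpr hc
    have h1 : ((ω:ℂ) • (1 : Matrix (Fin p) (Fin p) ℂ) - W)
        = (((1 : Matrix (Fin p) (Fin p) ℂ) - W) - (ε:ℂ) • 1)
          + (((ω - (1 - ε) : ℝ)) : ℂ) • 1 := by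
      have hcast : (((ω - (1 - ε) : ℝ)) : ℂ) = (ω:ℂ) - 1 + (ε:ℂ) := by push_cast; ring
      rw [hcast, add_smul, sub_smul, one_smul]
      abel
    rw [h1]
    exact hle.add hsmul
  set t : ℕ → ℂ := fun ℓ => (M ℓ).trace with htdef
  have ht0 : ∀ ℓ, 0 ≤ t ℓ := fun ℓ => trace_nonneg_of_psd' (hMpsd ℓ)
  have hstep : ∀ ℓ, t (ℓ + 1) ≤ (ω:ℂ) * t ℓ := by
    intro ℓ
    have h1 : t (ℓ + 1) ≤ (W * M ℓ).trace := by
      have := trace_nonneg_of_psd' (hrec ℓ)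
      rw [Matrix.trace_sub] at this
      exact sub_nonneg.mp this
    have h2 : (W * M ℓ).trace ≤ (ω:ℂ) * t ℓ := by
      have hpsd := hWle.mul_mul_conjTranspose_same (circ p (a ℓ))
      have hnn := trace_nonneg_of_psd' hpsd
      rw [Matrix.trace_mul_cycle, Matrix.trace_mul_comm] at hnn
      have expand : ((ω:ℂ) • (1 : Matrix (Fin p) (Fin p) ℂ) - W) * ((circ p (a ℓ))ᴴ * circ p (a ℓ))
          = (ω:ℂ) • M ℓ - W * M ℓ := by
        simp only [hMdef]
        rw [Matrix.sub_mul, Matrix.smul_mul, one_mul]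
      rw [expand, Matrix.trace_sub, Matrix.trace_smul] at hnn
      have := sub_nonneg.mp hnn
      rwa [smul_eq_mul] at this
    exact h1.trans h2
  set f : ℕ → ℝ := fun ℓ => (t ℓ).re with hfdef
  have hf0 : ∀ ℓ, 0 ≤ f ℓ := fun ℓ => (Complex.le_def.mp (ht0 ℓ)).1
  have him : ∀ ℓ, (t ℓ).im = 0 := fun ℓ => ((Complex.le_def.mp (ht0 ℓ)).2).symm
  have hfstep : ∀ ℓ, f (ℓ + 1) ≤ ω * f ℓ := by
    intro ℓ
    have := (Complex.le_def.mp (hstep ℓ)).1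
    simpa [hfdef, Complex.mul_re, him ℓ] using this
  have hiter : ∀ ℓ, f ℓ ≤ ω ^ ℓ * f 0 := by
    intro ℓ
    induction ℓ with
    | zero => simp
    | succ n ih =>
      calc f (n + 1) ≤ ω * f n := hfstep n
        _ ≤ ω * (ω ^ n * f 0) := mul_le_mul_of_nonneg_left ih hω0
        _ = ω ^ (n + 1) * f 0 := by ring
  intro i
  have hbound : ∀ ℓ, Complex.normSq (a ℓ i) ≤ f ℓ := by
    intro ℓ
    have hf : f ℓ = ∑ k : Fin p, ∑ j : Fin p, Complex.normSq (circ p (a ℓ) j k) := by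
      show ((M ℓ).trace).re = _
      simp only [hMdef]
      rw [Matrix.trace, Complex.re_sum]
      refine Finset.sum_congr rfl fun k _ => ?_
      rw [Matrix.diag_apply, Matrix.mul_apply, Complex.re_sum]
      refine Finset.sum_congr rfl fun j _ => ?_
      rw [Matrix.conjTranspose_apply]
      simp [Complex.mul_re, Complex.normSq_apply]
    have h1 : Complex.normSq (circ p (a ℓ) i 0) ≤ ∑ j, Complex.normSq (circ p (a ℓ) j 0) :=
      Finset.single_le_sum (f := fun j => Complex.normSq (circ p (a ℓ) j 0))
        (fun j _ => Complex.normSq_nonneg _) (Finset.mem_univ i)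
    have h2 : ∑ j, Complex.normSq (circ p (a ℓ) j 0)
        ≤ ∑ k, ∑ j, Complex.normSq (circ p (a ℓ) j k) :=
      Finset.single_le_sum (f := fun k => ∑ j, Complex.normSq (circ p (a ℓ) j k))
        (fun k _ => Finset.sum_nonneg fun j _ => Complex.normSq_nonneg _) (Finset.mem_univ 0)
    have h3 : circ p (a ℓ) i 0 = a ℓ i := by simp [circ]
    rw [hf]
    rw [h3] at h1
    linarith
  have hgeo : Filter.Tendsto (fun ℓ => ω ^ ℓ * f 0) Filter.atTop (nhds 0) := by
    have := (tendsto_pow_atTop_nhds_zero_of_lt_one hω0 hω1).mul_const (f 0)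
    simpa using this
  have hsq : Filter.Tendsto (fun ℓ => Complex.normSq (a ℓ i)) Filter.atTop (nhds 0) :=
    tendsto_of_tendsto_of_tendsto_of_le_of_le tendsto_const_nhds hgeo
      (fun ℓ => Complex.normSq_nonneg _) (fun ℓ => (hbound ℓ).trans (hiter ℓ))
  have hnorm : Filter.Tendsto (fun ℓ => ‖a ℓ i‖) Filter.atTop (nhds 0) := by
    have := (Real.continuous_sqrt.tendsto 0).comp hsq
    simpa [Function.comp_def, Complex.norm_def, Real.sqrt_zero] using this
  exact tendsto_zero_iff_norm_tendsto_zero.mpr hnorm
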